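/- For each κ > 0, the equation z^κ·((z − √κ)² + 1) = exp((z² − κ)/2)·κ^{κ/2} has exactly two solutions z in (0, ∞): one solution is z = √κ, and the other solution c_κ satisfies c_κ > √(1 + κ). -/
import Mathlib

open Real Set

set_option maxHeartbeats 1000000 in
/-- For each κ > 0, the equation
`z^κ·((z − √κ)² + 1) = exp((z² − κ)/2)·κ^{κ/2}` has exactly two solutions
`z ∈ (0, ∞)`: one is `z = √κ`, and the other, `c_κ`, satisfies `c_κ > √(1 + κ)`. -/
theorem stmt0 (κ : ℝ) (hκ : 0 < κ) :
    ∃ c : ℝ, Real.sqrt (1 + κ) < c ∧ c ≠ Real.sqrt κ ∧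
      {z : ℝ | 0 < z ∧ z ^ κ * ((z - Real.sqrt κ) ^ 2 + 1)
        = Real.exp ((z ^ 2 - κ) / 2) * κ ^ (κ / 2)} = {Real.sqrt κ, c} := by
  have hs0 : 0 < Real.sqrt κ := Real.sqrt_pos.mpr hκ
  set s := Real.sqrt κ with hsdef
  set t := Real.sqrt (1 + κ) with htdef
  have ht0 : 0 < t := Real.sqrt_pos.mpr (by linarith)
  have hssq : s ^ 2 = κ := Real.sq_sqrt hκ.le
  have htsq : t ^ 2 = 1 + κ := Real.sq_sqrt (by linarith)
  have hst : s < t := by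
    rw [hsdef, htdef]
    exact Real.sqrt_lt_sqrt hκ.le (by linarith)
  set f : ℝ → ℝ := fun z => κ * Real.log z + Real.log ((z - s) ^ 2 + 1)
      - (z ^ 2 - κ) / 2 - κ / 2 * Real.log κ with hfdef
  -- derivative
  have hderiv : ∀ z : ℝ, 0 < z →
      HasDerivAt f ((z - s) ^ 2 * (1 + κ - z ^ 2) / (z * ((z - s) ^ 2 + 1))) z := by
    intro z hz
    have hA : (0:ℝ) < (z - s) ^ 2 + 1 := by positivity
    have h1 : HasDerivAt (fun z : ℝ => κ * Real.log z) (κ * z⁻¹) z :=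
      (Real.hasDerivAt_log hz.ne').const_mul κ
    have h2 : HasDerivAt (fun z : ℝ => (z - s) ^ 2 + 1) (2 * (z - s)) z := by
      have := (((hasDerivAt_id z).sub_const s).pow 2).add_const (1:ℝ)
      simpa using this
    have h3 : HasDerivAt (fun z : ℝ => Real.log ((z - s) ^ 2 + 1))
        (2 * (z - s) / ((z - s) ^ 2 + 1)) z := h2.log hA.ne'
    have h4 : HasDerivAt (fun z : ℝ => (z ^ 2 - κ) / 2) z z := by
      have := ((hasDerivAt_pow 2 z).sub_const κ).div_const 2
      simpa using this
    have h5 : HasDerivAt f (κ * z⁻¹ + 2 * (z - s) / ((z - s) ^ 2 + 1) - z) z :=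
      ((h1.add h3).sub h4).sub_const (κ / 2 * Real.log κ)
    convert h5 using 1
    rw [← hssq]
    field_simp
    ring
  have hcont : ∀ x : ℝ, 0 < x → ContinuousAt f x := fun x hx => (hderiv x hx).continuousAt
  -- monotonicity pieces
  have mono1 : StrictMonoOn f (Ioc 0 s) := by
    apply strictMonoOn_of_deriv_pos (convex_Ioc 0 s)
      (fun x hx => (hcont x hx.1).continuousWithinAt)
    intro x hx
    rw [interior_Ioc] at hx
    rw [(hderiv x hx.1).deriv]
    apply div_pos
    · have hne : x - s ≠ 0 := by have := hx.2; intro h; nlinarith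
      have h1 : 0 < (x - s) ^ 2 := lt_of_le_of_ne (sq_nonneg _) (Ne.symm (pow_ne_zero 2 hne))
      have h2 : 0 < 1 + κ - x ^ 2 := by nlinarith [hx.1, hx.2]
      exact mul_pos h1 h2
    · have : (0:ℝ) < (x - s) ^ 2 + 1 := by positivity
      exact mul_pos hx.1 this
  have mono2 : StrictMonoOn f (Icc s t) := by
    apply strictMonoOn_of_deriv_pos (convex_Icc s t)
      (fun x hx => (hcont x (lt_of_lt_of_le hs0 hx.1)).continuousWithinAt)
    intro x hx
    rw [interior_Icc] at hx
    have hx0 : 0 < x := hs0.trans hx.1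
    rw [(hderiv x hx0).deriv]
    apply div_pos
    · have hne : x - s ≠ 0 := by have := hx.1; intro h; nlinarith
      have h1 : 0 < (x - s) ^ 2 := lt_of_le_of_ne (sq_nonneg _) (Ne.symm (pow_ne_zero 2 hne))
      have h2 : 0 < 1 + κ - x ^ 2 := by nlinarith [hx.2]
      exact mul_pos h1 h2
    · have : (0:ℝ) < (x - s) ^ 2 + 1 := by positivity
      exact mul_pos hx0 this
  have anti : StrictAntiOn f (Ici t) := by
    apply strictAntiOn_of_deriv_neg (convex_Ici t)
      (fun x hx => (hcont x (lt_of_lt_of_le ht0 hx)).continuousWithinAt)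
    intro x hx
    rw [interior_Ici] at hx
    have hx0 : 0 < x := ht0.trans hx
    rw [(hderiv x hx0).deriv]
    apply div_neg_of_neg_of_pos
    · have hx' : t < x := hx
      have hne : x - s ≠ 0 := by have h := hst.trans hx'; intro h2; nlinarith
      have h1 : 0 < (x - s) ^ 2 := lt_of_le_of_ne (sq_nonneg _) (Ne.symm (pow_ne_zero 2 hne))
      have h2 : 1 + κ - x ^ 2 < 0 := by
        nlinarith [mul_pos (sub_pos.mpr hx') (by linarith : (0:ℝ) < x + t)]
      exact mul_neg_of_pos_of_neg h1 h2
    · have : (0:ℝ) < (x - s) ^ 2 + 1 := by positivity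
      exact mul_pos hx0 this
  -- combined monotone on (0, t]
  have mono : StrictMonoOn f (Ioc 0 t) := by
    intro x hx y hy hxy
    rcases le_or_gt y s with h | h
    · exact mono1 ⟨hx.1, (hxy.trans_le h).le⟩ ⟨hy.1, h⟩ hxy
    · rcases le_or_gt x s with h2 | h2
      · calc f x ≤ f s := mono1.monotoneOn ⟨hx.1, h2⟩ ⟨hs0, le_refl s⟩ h2
          _ < f y := mono2 ⟨le_refl s, hst.le⟩ ⟨h.le, hy.2⟩ h
      · exact mono2 ⟨h2.le, hx.2⟩ ⟨h.le, hy.2⟩ hxy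
  -- value at s
  have hfs : f s = 0 := by
    simp only [hfdef, sub_self]
    rw [hsdef, Real.log_sqrt hκ.le]
    norm_num
    rw [hssq]
    ring
  have hft : 0 < f t := by
    have := mono2 ⟨le_refl s, hst.le⟩ ⟨hst.le, le_refl t⟩ hst
    linarith [hfs ▸ this]
  -- a large point where f is negative
  set A : ℝ := 2 * s + 2 + κ / 2 + κ / 2 * |Real.log κ| with hAdef
  have hA0 : 0 ≤ A := by positivity
  set M : ℝ := max (t + 1) (2 * (κ + 2 + A) + 2) with hMdef
  have hM1 : t + 1 ≤ M := le_max_left _ _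
  have hM2 : 2 * (κ + 2 + A) + 2 ≤ M := le_max_right _ _
  have hM0 : 0 < M := by nlinarith
  have hM1' : 1 ≤ M := by nlinarith
  have hfM : f M < 0 := by
    have hlog1 : Real.log M ≤ M := Real.log_le_self hM0.le
    have hsqrt : Real.sqrt ((M - s) ^ 2 + 1) ≤ M + s + 1 := by
      rw [show M + s + 1 = Real.sqrt ((M + s + 1) ^ 2) from
        (Real.sqrt_sq (by positivity)).symm]
      apply Real.sqrt_le_sqrt
      nlinarith [hs0, hM0]
    have hlog2 : Real.log ((M - s) ^ 2 + 1) ≤ 2 * (M + s + 1) := by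
      have h := Real.log_sqrt (by positivity : (0:ℝ) ≤ (M - s) ^ 2 + 1)
      have h2 : Real.log (Real.sqrt ((M - s) ^ 2 + 1)) ≤ M + s + 1 :=
        le_trans (Real.log_le_self (Real.sqrt_nonneg _)) hsqrt
      rw [h] at h2
      linarith
    have habs : -(κ / 2 * Real.log κ) ≤ κ / 2 * |Real.log κ| := by
      have h1 := neg_abs_le (Real.log κ)
      nlinarith [abs_nonneg (Real.log κ)]
    simp only [hfdef]
    clear_value A M
    nlinarith [mul_le_mul_of_nonneg_left hlog1 hκ.le,
      mul_le_mul_of_nonneg_left hM2 hM0.le,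
      mul_le_mul_of_nonneg_left hM1' hA0]
  -- IVT gives the second root
  have htM : t ≤ M := by linarith
  obtain ⟨c, hcmem, hfc⟩ : ∃ c ∈ Icc t M, f c = 0 := by
    have hc : ContinuousOn f (Icc t M) :=
      fun x hx => (hcont x (lt_of_lt_of_le ht0 hx.1)).continuousWithinAt
    have h0 : (0:ℝ) ∈ Icc (f M) (f t) := ⟨hfM.le, hft.le⟩
    obtain ⟨c, hc1, hc2⟩ := intermediate_value_Icc' htM hc h0
    exact ⟨c, hc1, hc2⟩
  have hct : t < c := by
    rcases lt_or_eq_of_le hcmem.1 with h | h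
    · exact h
    · exfalso; rw [← h] at hfc; exact hft.ne' hfc
  -- equation ↔ f = 0
  have hiff : ∀ z : ℝ, 0 < z →
      (z ^ κ * ((z - s) ^ 2 + 1) = Real.exp ((z ^ 2 - κ) / 2) * κ ^ (κ / 2) ↔ f z = 0) := by
    intro z hz
    have hA2 : (0:ℝ) < (z - s) ^ 2 + 1 := by positivity
    rw [Real.rpow_def_of_pos hz, Real.rpow_def_of_pos hκ, ← Real.exp_log hA2,
      ← Real.exp_add, ← Real.exp_add, Real.exp_eq_exp]
    simp only [hfdef]
    constructor <;> intro h <;> linarith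
  refine ⟨c, hct, (hst.trans hct).ne', ?_⟩
  ext z
  simp only [mem_setOf_eq, mem_insert_iff, mem_singleton_iff]
  constructor
  · rintro ⟨hz, heq⟩
    have hfz : f z = 0 := (hiff z hz).mp heq
    rcases le_or_gt z t with h | h
    · left
      exact mono.injOn ⟨hz, h⟩ ⟨hs0, hst.le⟩ (by rw [hfz, hfs])
    · right
      exact anti.injOn h.le hct.le (hfz.trans hfc.symm)
  · rintro (rfl | rfl)
    · exact ⟨hs0, (hiff s hs0).mpr hfs⟩
    · exact ⟨ht0.trans hct, (hiff _ (ht0.trans hct)).mpr hfc⟩
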